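/- Let N ≥ 1 and r ≥ 0 be integers, t_min > 0, β > 0, 0 ≤ φ < 1, 0 ≤ τ_est, and suppose t_min ≤ D and (1 − φ)·t_min ≤ D − τ_est ≤ D. For j = 1, ..., N let T_{j} and X_{j,1}, ..., X_{j,r+1} be mutually independent Pareto(t_min, β) random variables (independent across j as well). Say task j fails if T_{j} > D and (1 − φ)·X_{j,k} > D − τ_est for every k = 1, ..., r+1. Then the probability that no task fails equals (1 − (1 − φ)^{β·(r+1)}·t_min^{β·(r+2)}/(D^β · (D − τ_est)^{β·(r+1)}))^N. -/

import Mathlib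

open MeasureTheory ProbabilityTheory Set

/-- A real random variable `X` is Pareto(`tmin`, `β`): `P(X > t) = (tmin/t)^β` for `t ≥ tmin`
and `P(X > t) = 1` for `t < tmin`. -/
def IsPareto {Ω : Type*} [MeasurableSpace Ω] (μ : Measure Ω) (X : Ω → ℝ)
    (tmin β : ℝ) : Prop :=
  Measurable X ∧
    (∀ t : ℝ, tmin ≤ t → μ {ω | t < X ω} = ENNReal.ofReal ((tmin / t) ^ β)) ∧
    (∀ t : ℝ, t < tmin → μ {ω | t < X ω} = 1)

lemma pareto_aux (tmin β D τ φ : ℝ) (htmin : 0 < tmin) (hD : 0 < D) (hφ : 0 < 1 - φ)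
    (hτ : 0 < D - τ) (r : ℕ) :
    (tmin / D) ^ β * ((tmin / ((D - τ) / (1 - φ))) ^ β) ^ (r + 1)
      = (1 - φ) ^ (β * ((r : ℝ) + 1)) * tmin ^ (β * ((r : ℝ) + 2))
          / (D ^ β * (D - τ) ^ (β * ((r : ℝ) + 1))) := by
  have h1 : tmin / ((D - τ) / (1 - φ)) = tmin * (1 - φ) / (D - τ) := by
    rw [div_div_eq_mul_div]
  rw [h1, Real.div_rpow (by positivity) hτ.le, Real.mul_rpow htmin.le hφ.le,
      Real.div_rpow htmin.le hD.le, div_pow, mul_pow,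
      ← Real.rpow_natCast (tmin ^ β) (r + 1), ← Real.rpow_natCast ((1 - φ) ^ β) (r + 1),
      ← Real.rpow_natCast ((D - τ) ^ β) (r + 1),
      ← Real.rpow_mul htmin.le, ← Real.rpow_mul hφ.le, ← Real.rpow_mul hτ.le]
  push_cast
  rw [show β * ((r : ℝ) + 2) = β + β * ((r : ℝ) + 1) by ring, Real.rpow_add htmin]
  have hd1 : D ^ β ≠ 0 := by positivity
  have hd2 : (D - τ) ^ (β * ((r : ℝ) + 1)) ≠ 0 := by positivity
  field_simp

/-- paper's Theorem 5, PoCD of Speculative-Resume: task `j` fails iff its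
original attempt `T j` exceeds `D` and each of the `r+1` resumed attempts, which take time
`(1−φ)·X j k`, exceeds `D − τ_est`; the probability that no task fails is
`(1 − (1−φ)^{β(r+1)}·tmin^{β(r+2)}/(D^β (D−τ_est)^{β(r+1)}))^N`. -/
theorem pocd_speculative_resume
    {Ω : Type*} [MeasurableSpace Ω] (μ : Measure Ω) [IsProbabilityMeasure μ]
    (N r : ℕ) (hN : 1 ≤ N) (tmin β D τest φ : ℝ)
    (htmin : 0 < tmin) (hβ : 0 < β) (hφ0 : 0 ≤ φ) (hφ1 : φ < 1) (hτest : 0 ≤ τest)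
    (hD : tmin ≤ D) (h1 : (1 - φ) * tmin ≤ D - τest) (h2 : D - τest ≤ D)
    (T : Fin N → Ω → ℝ) (X : Fin N → Fin (r + 1) → Ω → ℝ)
    (hindep : iIndepFun
      (fun p : Fin N × Fin (r + 2) =>
        (Fin.cons (T p.1) (X p.1) : Fin (r + 2) → Ω → ℝ) p.2) μ)
    (hT : ∀ j, IsPareto μ (T j) tmin β)
    (hX : ∀ j k, IsPareto μ (X j k) tmin β) :
    μ {ω | ∀ j, ¬ (D < T j ω ∧ ∀ k, D - τest < (1 - φ) * X j k ω)}
      = ENNReal.ofReal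
          ((1 - (1 - φ) ^ (β * (r + 1 : ℝ)) * tmin ^ (β * (r + 2 : ℝ))
              / (D ^ β * (D - τest) ^ (β * (r + 1 : ℝ)))) ^ N) := by
  classical
  have h1φ : (0:ℝ) < 1 - φ := by linarith
  set c : ℝ := (D - τest) / (1 - φ) with hc_def
  have hDpos : 0 < D := lt_of_lt_of_le htmin hD
  have hDτ : 0 < D - τest := lt_of_lt_of_le (by positivity) h1
  have hc : tmin ≤ c := by
    rw [hc_def, le_div_iff₀ h1φ]
    nlinarith [h1]
  have hcpos : 0 < c := lt_of_lt_of_le htmin hc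
  -- measurability of the family
  have hmeas : ∀ (j : Fin N) (k : Fin (r + 2)),
      Measurable ((Fin.cons (T j) (X j) : Fin (r + 2) → Ω → ℝ) k) := by
    intro j k
    refine Fin.cases ?_ ?_ k
    · simpa using (hT j).1
    · intro k'; simpa using (hX j k').1
  -- key: independence within a single task
  have key : ∀ (i : Fin N) (u : Fin (r + 2) → Set ℝ), (∀ k, MeasurableSet (u k)) →
      μ (⋂ k, (Fin.cons (T i) (X i) : Fin (r + 2) → Ω → ℝ) k ⁻¹' u k)
        = ∏ k, μ ((Fin.cons (T i) (X i) : Fin (r + 2) → Ω → ℝ) k ⁻¹' u k) := by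
    intro i u hu
    have h2' := hindep.meas_biInter (S := ({i} : Finset (Fin N)) ×ˢ Finset.univ)
      (s := fun p => (Fin.cons (T p.1) (X p.1) : Fin (r + 2) → Ω → ℝ) p.2 ⁻¹' u p.2)
      (fun p _ => ⟨u p.2, hu p.2, rfl⟩)
    have e : (⋂ p ∈ ({i} : Finset (Fin N)) ×ˢ (Finset.univ : Finset (Fin (r + 2))),
        (Fin.cons (T p.1) (X p.1) : Fin (r + 2) → Ω → ℝ) p.2 ⁻¹' u p.2)
        = ⋂ k, (Fin.cons (T i) (X i) : Fin (r + 2) → Ω → ℝ) k ⁻¹' u k := by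
      ext ω
      simp only [mem_iInter, Finset.mem_product, Finset.mem_singleton, Finset.mem_univ,
        and_true, Prod.forall]
      constructor
      · intro h k; exact h i k rfl
      · rintro h a k rfl; exact h k
    rw [e] at h2'
    rw [h2', Finset.prod_product, Finset.prod_singleton]
  -- π-system
  set π : Fin N → Set (Set Ω) := fun j =>
    {s | ∃ u : Fin (r + 2) → Set ℝ, (∀ k, MeasurableSet (u k)) ∧
      s = ⋂ k, (Fin.cons (T j) (X j) : Fin (r + 2) → Ω → ℝ) k ⁻¹' u k} with hπ_def
  have hπle : ∀ j, MeasurableSpace.generateFrom (π j) ≤ ‹MeasurableSpace Ω› := by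
    intro j
    refine MeasurableSpace.generateFrom_le ?_
    intro s hs
    simp only [hπ_def, mem_setOf_eq] at hs
    obtain ⟨u, hu, rfl⟩ := hs
    exact MeasurableSet.iInter fun k => (hmeas j k) (hu k)
  have hπpi : ∀ j, IsPiSystem (π j) := by
    intro j s hs t ht _
    simp only [hπ_def, mem_setOf_eq] at hs ht ⊢
    obtain ⟨u, hu, rfl⟩ := hs
    obtain ⟨v, hv, rfl⟩ := ht
    refine ⟨fun k => u k ∩ v k, fun k => (hu k).inter (hv k), ?_⟩
    ext ω
    simp only [mem_inter_iff, mem_iInter, mem_preimage]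
    exact ⟨fun ⟨ha, hb⟩ k => ⟨ha k, hb k⟩, fun h => ⟨fun k => (h k).1, fun k => (h k).2⟩⟩
  have hπind : iIndepSets π μ := by
    rw [iIndepSets_iff]
    intro S F hF
    set G : Fin N → Set Ω := fun i => if h : i ∈ S then F i else univ with hG_def
    have hGπ : ∀ i, G i ∈ π i := by
      intro i
      by_cases h : i ∈ S
      · simpa [hG_def, h] using hF i h
      · simp only [hπ_def, mem_setOf_eq]
        refine ⟨fun _ => univ, fun _ => MeasurableSet.univ, ?_⟩
        simp [hG_def, h]
    simp only [hπ_def, mem_setOf_eq] at hGπ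
    choose u hu hset using hGπ
    have hFG : ∀ i ∈ S, F i = G i := by intro i hi; simp [hG_def, hi]
    have e1 : ⋂ i ∈ S, F i = ⋂ p ∈ S ×ˢ (Finset.univ : Finset (Fin (r + 2))),
        (Fin.cons (T p.1) (X p.1) : Fin (r + 2) → Ω → ℝ) p.2 ⁻¹' u p.1 p.2 := by
      ext ω
      simp only [mem_iInter, Finset.mem_product, Finset.mem_univ, and_true, Prod.forall]
      constructor
      · intro h a k ha
        have hm := h a ha
        rw [hFG a ha, hset a] at hm
        exact mem_iInter.1 hm k
      · intro h i hi
        rw [hFG i hi, hset i]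
        exact mem_iInter.2 fun k => h i k hi
    have h2' := hindep.meas_biInter (S := S ×ˢ Finset.univ)
      (s := fun p => (Fin.cons (T p.1) (X p.1) : Fin (r + 2) → Ω → ℝ) p.2 ⁻¹' u p.1 p.2)
      (fun p _ => ⟨u p.1 p.2, hu p.1 p.2, rfl⟩)
    rw [e1, h2', Finset.prod_product]
    refine Finset.prod_congr rfl fun i hi => ?_
    rw [hFG i hi, hset i, key i (u i) (hu i)]
  have hiIndep : iIndep (fun j => MeasurableSpace.generateFrom (π j)) μ :=
    iIndepSets.iIndep hπle π hπpi (fun _ => rfl) hπind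
  -- the events
  set u0 : Fin (r + 2) → Set ℝ := Fin.cons (Ioi D) (fun _ => Ioi c) with hu0_def
  have hu0 : ∀ k, MeasurableSet (u0 k) := by
    intro k
    refine Fin.cases ?_ ?_ k
    · simpa [hu0_def] using measurableSet_Ioi
    · intro k'; simpa [hu0_def] using measurableSet_Ioi
  set A : Fin N → Set Ω := fun j =>
    ⋂ k, (Fin.cons (T j) (X j) : Fin (r + 2) → Ω → ℝ) k ⁻¹' u0 k with hA_def
  have hAπ : ∀ j, A j ∈ π j := by
    intro j
    simp only [hπ_def, mem_setOf_eq]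
    exact ⟨u0, hu0, by rw [hA_def]⟩
  have hAmeas : ∀ j, MeasurableSet (A j) := by
    intro j
    rw [hA_def]
    exact MeasurableSet.iInter fun k => (hmeas j k) (hu0 k)
  -- numeric values
  set a : ℝ := (tmin / D) ^ β with ha_def
  set b : ℝ := (tmin / c) ^ β with hb_def
  have ha0 : 0 ≤ a := by rw [ha_def]; positivity
  have hb0 : 0 ≤ b := by rw [hb_def]; positivity
  have ha1 : a ≤ 1 := by
    rw [ha_def]
    exact Real.rpow_le_one (by positivity) ((div_le_one hDpos).2 hD) hβ.le
  have hb1 : b ≤ 1 := by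
    rw [hb_def]
    exact Real.rpow_le_one (by positivity) ((div_le_one hcpos).2 hc) hβ.le
  set q : ℝ := a * b ^ (r + 1) with hq_def
  have hq0 : 0 ≤ q := by
    rw [hq_def]; exact mul_nonneg ha0 (pow_nonneg hb0 _)
  have hq1 : q ≤ 1 := by
    rw [hq_def]; exact mul_le_one₀ ha1 (pow_nonneg hb0 _) (pow_le_one₀ hb0 hb1)
  have hAval : ∀ j, μ (A j) = ENNReal.ofReal q := by
    intro j
    rw [hA_def]
    rw [key j u0 hu0, Fin.prod_univ_succ]
    have e0 : μ ((Fin.cons (T j) (X j) : Fin (r + 2) → Ω → ℝ) 0 ⁻¹' u0 0)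
        = ENNReal.ofReal a := by
      have h : (Fin.cons (T j) (X j) : Fin (r + 2) → Ω → ℝ) 0 ⁻¹' u0 0 = {ω | D < T j ω} := by
        ext ω; simp [hu0_def]
      rw [h, ha_def]
      exact (hT j).2.1 D hD
    have es : ∀ k : Fin (r + 1),
        μ ((Fin.cons (T j) (X j) : Fin (r + 2) → Ω → ℝ) k.succ ⁻¹' u0 k.succ)
          = ENNReal.ofReal b := by
      intro k
      have h : (Fin.cons (T j) (X j) : Fin (r + 2) → Ω → ℝ) k.succ ⁻¹' u0 k.succ
          = {ω | c < X j k ω} := by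
        ext ω; simp [hu0_def]
      rw [h, hb_def]
      exact (hX j k).2.1 c hc
    rw [e0, Finset.prod_congr rfl (fun k _ => es k), Finset.prod_const, Finset.card_univ,
      Fintype.card_fin, ← ENNReal.ofReal_pow hb0, ← ENNReal.ofReal_mul ha0, hq_def]
  -- the target set
  have hmemA : ∀ (j : Fin N) (ω : Ω), ω ∈ A j ↔
      (D < T j ω ∧ ∀ k, D - τest < (1 - φ) * X j k ω) := by
    intro j ω
    rw [hA_def]
    simp only [mem_iInter, mem_preimage]
    constructor
    · intro h
      refine ⟨by simpa [hu0_def] using h 0, fun k => ?_⟩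
      have hk := h k.succ
      simp only [hu0_def, Fin.cons_succ, mem_Ioi] at hk
      rw [hc_def, div_lt_iff₀ h1φ] at hk
      nlinarith [hk]
    · rintro ⟨h0, hk⟩ k
      refine Fin.cases ?_ ?_ k
      · simpa [hu0_def] using h0
      · intro k'
        simp only [hu0_def, Fin.cons_succ, mem_Ioi]
        rw [hc_def, div_lt_iff₀ h1φ]
        nlinarith [hk k']
  have hsetEq : {ω | ∀ j, ¬ (D < T j ω ∧ ∀ k, D - τest < (1 - φ) * X j k ω)}
      = ⋂ j, (A j)ᶜ := by
    ext ω
    simp only [mem_setOf_eq, mem_iInter, mem_compl_iff]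
    exact forall_congr' fun j => not_congr (hmemA j ω).symm
  have hcompl : ∀ j, μ ((A j)ᶜ) = ENNReal.ofReal (1 - q) := by
    intro j
    rw [measure_compl (hAmeas j) (measure_ne_top μ _), hAval j, measure_univ,
      ENNReal.ofReal_sub 1 hq0, ENNReal.ofReal_one]
  rw [hsetEq,
    hiIndep.meas_iInter (fun j => (MeasurableSpace.measurableSet_generateFrom (hAπ j)).compl),
    Finset.prod_congr rfl (fun j _ => hcompl j), Finset.prod_const, Finset.card_univ,
    Fintype.card_fin, ← ENNReal.ofReal_pow (by linarith : (0:ℝ) ≤ 1 - q)]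
  have hqE : q = (1 - φ) ^ (β * (r + 1 : ℝ)) * tmin ^ (β * (r + 2 : ℝ))
      / (D ^ β * (D - τest) ^ (β * (r + 1 : ℝ))) := by
    rw [hq_def, ha_def, hb_def, hc_def]
    exact pareto_aux tmin β D τest φ htmin hDpos h1φ hDτ r
  rw [hqE]
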